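/- (Quantum Miura transformation for the finite W algebra of the partition 4 = 2 + 2.) Let A be an associative ℂ-algebra containing elements e₁, h₁, f₁, e₂, h₂, f₂, s such that [e₁,f₁] = h₁, [h₁,e₁] = 2e₁, [h₁,f₁] = −2f₁, similarly [e₂,f₂] = h₂, [h₂,e₂] = 2e₂, [h₂,f₂] = −2f₂, every element of {e₁,h₁,f₁} commutes with every element of {e₂,h₂,f₂}, and s commutes with all six (here [a,b] = ab − ba). Define H = ½(h₁+h₂), E = −e₁−e₂, F = −f₁−f₂, G⁺ = ½e₁h₂ − ½e₂h₁ + ¼s(e₁−e₂) + (e₁−e₂), G⁰ = f₁e₂ − f₂e₁ + ¼s(h₁−h₂) + (h₁−h₂), G⁻ = ½f₁h₂ − ½f₂h₁ − ¼s(f₁−f₂) − (f₁−f₂), and C = (⅛s² + s) + ½(e₁f₁+f₁e₁+e₂f₂+f₂e₂) + ¼(h₁²+h₂²). Then: [E,F] = 2H, [H,E] = E, [H,F] = −F, [E,G⁰] = 2G⁺, [E,G⁻] = G⁰, [F,G⁺] = G⁰, [F,G⁰] = 2G⁻, [H,G⁺] = G⁺, [H,G⁻] = −G⁻, [G⁰,G⁺]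 = −CE + EH² + ½EEF + ½EFE − 2E, [G⁰,G⁻] = −CF + FH² + ½FFE + ½FEF − 2F, [G⁺,G⁻] = −CH + H³ + ½HEF + ½HFE − 2H, and C commutes with H, E, F, G⁺, G⁰, G⁻. -/
import Mathlib
set_option maxHeartbeats 4000000

private lemma miura_swap {A : Type*} [Ring A] {a b c : A} (h : b * a = a * b + c) :
    ∀ t : A, b * (a * t) = a * (b * t) + c * t := fun t => by
  rw [← mul_assoc, h, add_mul, mul_assoc]

private lemma miura_swap' {A : Type*} [Ring A] {a b : A} (h : b * a = a * b) :
    ∀ t : A, b * (a * t) = a * (b * t) := fun t => by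
  rw [← mul_assoc, h, mul_assoc]

theorem quantum_miura_partition_2_2
    (A : Type*) [Ring A] [Algebra ℂ A]
    (e₁ h₁ f₁ e₂ h₂ f₂ s : A)
    (hef₁ : e₁ * f₁ - f₁ * e₁ = h₁)
    (hhe₁ : h₁ * e₁ - e₁ * h₁ = 2 * e₁)
    (hhf₁ : h₁ * f₁ - f₁ * h₁ = -(2 * f₁))
    (hef₂ : e₂ * f₂ - f₂ * e₂ = h₂)
    (hhe₂ : h₂ * e₂ - e₂ * h₂ = 2 * e₂)
    (hhf₂ : h₂ * f₂ - f₂ * h₂ = -(2 * f₂))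
    (hcomm : ∀ a ∈ ({e₁, h₁, f₁} : Set A), ∀ b ∈ ({e₂, h₂, f₂} : Set A), a * b = b * a)
    (hse₁ : s * e₁ = e₁ * s) (hsh₁ : s * h₁ = h₁ * s) (hsf₁ : s * f₁ = f₁ * s)
    (hse₂ : s * e₂ = e₂ * s) (hsh₂ : s * h₂ = h₂ * s) (hsf₂ : s * f₂ = f₂ * s)
    (H E F Gp G0 Gm C : A)
    (hH : H = (1/2 : ℂ) • (h₁ + h₂))
    (hE : E = -e₁ - e₂)
    (hF : F = -f₁ - f₂)
    (hGp : Gp = (1/2 : ℂ) • (e₁ * h₂) - (1/2 : ℂ) • (e₂ * h₁)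
        + (1/4 : ℂ) • (s * (e₁ - e₂)) + (e₁ - e₂))
    (hG0 : G0 = f₁ * e₂ - f₂ * e₁ + (1/4 : ℂ) • (s * (h₁ - h₂)) + (h₁ - h₂))
    (hGm : Gm = (1/2 : ℂ) • (f₁ * h₂) - (1/2 : ℂ) • (f₂ * h₁)
        - (1/4 : ℂ) • (s * (f₁ - f₂)) - (f₁ - f₂))
    (hC : C = ((1/8 : ℂ) • s ^ 2 + s)
        + (1/2 : ℂ) • (e₁ * f₁ + f₁ * e₁ + e₂ * f₂ + f₂ * e₂)
        + (1/4 : ℂ) • (h₁ ^ 2 + h₂ ^ 2)) :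
    E * F - F * E = 2 * H ∧
    H * E - E * H = E ∧
    H * F - F * H = -F ∧
    E * G0 - G0 * E = 2 * Gp ∧
    E * Gm - Gm * E = G0 ∧
    F * Gp - Gp * F = G0 ∧
    F * G0 - G0 * F = 2 * Gm ∧
    H * Gp - Gp * H = Gp ∧
    H * Gm - Gm * H = -Gm ∧
    G0 * Gp - Gp * G0 = -(C * E) + E * H ^ 2 + (1/2 : ℂ) • (E * E * F)
        + (1/2 : ℂ) • (E * F * E) - 2 * E ∧
    G0 * Gm - Gm * G0 = -(C * F) + F * H ^ 2 + (1/2 : ℂ) • (F * F * E)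
        + (1/2 : ℂ) • (F * E * F) - 2 * F ∧
    Gp * Gm - Gm * Gp = -(C * H) + H ^ 3 + (1/2 : ℂ) • (H * E * F)
        + (1/2 : ℂ) • (H * F * E) - 2 * H ∧
    C * H = H * C ∧ C * E = E * C ∧ C * F = F * C ∧
    C * Gp = Gp * C ∧ C * G0 = G0 * C ∧ C * Gm = Gm * C := by
  subst hH hE hF hGp hG0 hGm hC
  -- oriented rewrite rules within each sl₂
  have r1 : h₁ * e₁ = e₁ * h₁ + (e₁ + e₁) := by
    have h2 : h₁ * e₁ - e₁ * h₁ = e₁ + e₁ := by rw [hhe₁, two_mul]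
    rw [← h2]; abel
  have r2 : f₁ * e₁ = e₁ * f₁ + (-h₁) := by rw [← hef₁]; abel
  have r3 : f₁ * h₁ = h₁ * f₁ + (f₁ + f₁) := by
    have h2 : f₁ * h₁ - h₁ * f₁ = f₁ + f₁ := by rw [← neg_sub, hhf₁, neg_neg, two_mul]
    rw [← h2]; abel
  have r4 : h₂ * e₂ = e₂ * h₂ + (e₂ + e₂) := by
    have h2 : h₂ * e₂ - e₂ * h₂ = e₂ + e₂ := by rw [hhe₂, two_mul]
    rw [← h2]; abel
  have r5 : f₂ * e₂ = e₂ * f₂ + (-h₂) := by rw [← hef₂]; abel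
  have r6 : f₂ * h₂ = h₂ * f₂ + (f₂ + f₂) := by
    have h2 : f₂ * h₂ - h₂ * f₂ = f₂ + f₂ := by rw [← neg_sub, hhf₂, neg_neg, two_mul]
    rw [← h2]; abel
  -- cross-commutation rules (move algebra-2 letters right of algebra-1 letters)
  have c1 : e₂ * e₁ = e₁ * e₂ := (hcomm e₁ (by simp) e₂ (by simp)).symm
  have c2 : h₂ * e₁ = e₁ * h₂ := (hcomm e₁ (by simp) h₂ (by simp)).symm
  have c3 : f₂ * e₁ = e₁ * f₂ := (hcomm e₁ (by simp) f₂ (by simp)).symm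
  have c4 : e₂ * h₁ = h₁ * e₂ := (hcomm h₁ (by simp) e₂ (by simp)).symm
  have c5 : h₂ * h₁ = h₁ * h₂ := (hcomm h₁ (by simp) h₂ (by simp)).symm
  have c6 : f₂ * h₁ = h₁ * f₂ := (hcomm h₁ (by simp) f₂ (by simp)).symm
  have c7 : e₂ * f₁ = f₁ * e₂ := (hcomm f₁ (by simp) e₂ (by simp)).symm
  have c8 : h₂ * f₁ = f₁ * h₂ := (hcomm f₁ (by simp) h₂ (by simp)).symm
  have c9 : f₂ * f₁ = f₁ * f₂ := (hcomm f₁ (by simp) f₂ (by simp)).symm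
  -- nested versions
  have n1 := miura_swap r1
  have n2 := miura_swap r2
  have n3 := miura_swap r3
  have n4 := miura_swap r4
  have n5 := miura_swap r5
  have n6 := miura_swap r6
  have m1 := miura_swap' c1
  have m2 := miura_swap' c2
  have m3 := miura_swap' c3
  have m4 := miura_swap' c4
  have m5 := miura_swap' c5
  have m6 := miura_swap' c6
  have m7 := miura_swap' c7
  have m8 := miura_swap' c8
  have m9 := miura_swap' c9
  have p1 := miura_swap' hse₁
  have p2 := miura_swap' hsh₁
  have p3 := miura_swap' hsf₁
  have p4 := miura_swap' hse₂
  have p5 := miura_swap' hsh₂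
  have p6 := miura_swap' hsf₂
  refine ⟨?_, ?_, ?_, ?_, ?_, ?_, ?_, ?_, ?_, ?_, ?_, ?_, ?_, ?_, ?_, ?_, ?_, ?_⟩ <;>
  · simp only [pow_succ, pow_zero, one_mul, two_mul, mul_add, add_mul, mul_sub, sub_mul,
      neg_mul, mul_neg, smul_add, smul_sub, smul_neg, smul_smul, smul_mul_assoc,
      mul_smul_comm, mul_assoc,
      r1, r2, r3, r4, r5, r6, c1, c2, c3, c4, c5, c6, c7, c8, c9,
      hse₁, hsh₁, hsf₁, hse₂, hsh₂, hsf₂,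
      n1, n2, n3, n4, n5, n6, m1, m2, m3, m4, m5, m6, m7, m8, m9,
      p1, p2, p3, p4, p5, p6]
    module
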